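/- Let c > 0 and define f(t,p) = (1/2)·log₂((1+t)/(1+c·p)) on the domain D = {(t,p) : t > −1, p > −1/c}. Then for all (t₁,p₁), (t₂,p₂) ∈ D: f(t₂,p₂) ≥ f(t₁,p₁) if and only if (t₂−t₁)/(1+t₁) − c·(p₂−p₁)/(1+c·p₁) ≥ 0, i.e. the gradient inequality ∇f(t₁,p₁)ᵀ((t₂,p₂)−(t₁,p₁)) ≥ 0 holds. (This is the pseudoconvexity and pseudoconcavity—pseudolinearity—of the per-subcarrier secure-rate objective asserted in Lemma 1.) -/

import Mathlib

/-- Pseudolinearity of the per-subcarrier secure-rate objective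
`f(t,p) = (1/2)·log₂((1+t)/(1+c·p))` on `D = {(t,p) : t > −1, p > −1/c}`:
`f(t₂,p₂) ≥ f(t₁,p₁)` iff the gradient inequality
`(t₂−t₁)/(1+t₁) − c·(p₂−p₁)/(1+c·p₁) ≥ 0` holds (Lemma 1). -/
theorem pseudolinear_objective (c : ℝ) (hc : 0 < c) (t₁ p₁ t₂ p₂ : ℝ)
    (ht₁ : -1 < t₁) (hp₁ : -(1 / c) < p₁) (ht₂ : -1 < t₂) (hp₂ : -(1 / c) < p₂) :
    (1 / 2) * Real.logb 2 ((1 + t₂) / (1 + c * p₂)) ≥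
      (1 / 2) * Real.logb 2 ((1 + t₁) / (1 + c * p₁)) ↔
    (t₂ - t₁) / (1 + t₁) - c * (p₂ - p₁) / (1 + c * p₁) ≥ 0 := by
  have hA : (0:ℝ) < 1 + t₁ := by linarith
  have hB : (0:ℝ) < 1 + t₂ := by linarith
  have hC : (0:ℝ) < 1 + c * p₁ := by
    have := (mul_lt_mul_iff_right₀ hc).2 hp₁
    rw [mul_neg, mul_one_div, div_self hc.ne'] at this
    linarith
  have hD : (0:ℝ) < 1 + c * p₂ := by
    have := (mul_lt_mul_iff_right₀ hc).2 hp₂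
    rw [mul_neg, mul_one_div, div_self hc.ne'] at this
    linarith
  have h1 : (0:ℝ) < (1 + t₁) / (1 + c * p₁) := div_pos hA hC
  have h2 : (0:ℝ) < (1 + t₂) / (1 + c * p₂) := div_pos hB hD
  rw [ge_iff_le, mul_le_mul_iff_right₀ (by norm_num : (0:ℝ) < 1/2),
    Real.logb_le_logb (by norm_num) h1 h2,
    div_le_div_iff₀ hC hD]
  rw [div_sub_div _ _ hA.ne' hC.ne', ge_iff_le, le_div_iff₀ (mul_pos hA hC), zero_mul,
    ← sub_nonneg]
  constructor <;> intro h <;> nlinarith
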